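/- Let p be an odd prime, r a positive integer, F a finite field with p^r elements, and n ≥ 1. Let P(n,F) be the subgroup of Sp(2n,F) consisting of block matrices [[A, A·B],[0, (Aᵀ)⁻¹]] with A ∈ Up_n(F) and B symmetric. Then the center of P(n,F) is exactly the set of block matrices [[I_n, D],[0, I_n]] with D = d·E_{1,1} for d ∈ F, and this center is isomorphic to the additive group of F (hence to (ℤ/pℤ)^r). -/

import Mathlib

open Matrix

/-- `M` is an upper unitriangular matrix. -/
def IsUnitriangular {n : ℕ} {F : Type} [Field F]
    (M : Matrix (Fin n) (Fin n) F) : Prop :=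
  (∀ i, M i i = 1) ∧ ∀ i j : Fin n, j < i → M i j = 0

namespace CSS
variable {n : ℕ} {F : Type} [Field F]

lemma det_eq_one {A : Matrix (Fin n) (Fin n) F} (h : IsUnitriangular A) : A.det = 1 := by
  rw [Matrix.det_of_upperTriangular (fun i j hij => h.2 i j hij)]
  simp [h.1]

lemma isUnit_det {A : Matrix (Fin n) (Fin n) F} (h : IsUnitriangular A) : IsUnit A.det := by
  rw [det_eq_one h]; exact isUnit_one

lemma transpose_std (i j : Fin n) (c : F) :
    (Matrix.single i j c)ᵀ = Matrix.single j i c := by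
  ext a b
  simp only [Matrix.transpose_apply, Matrix.single, Matrix.of_apply]
  by_cases h1 : i = b <;> by_cases h2 : j = a <;> simp [h1, h2]

lemma mulE_mulT (A : Matrix (Fin n) (Fin n) F) (j a b : Fin n) :
    (A * Matrix.single j j (1:F) * Aᵀ) a b = A a j * A b j := by
  rw [Matrix.mul_assoc, Matrix.mul_apply]
  rw [Finset.sum_eq_single j]
  · simp
  · intro k _ hk
    rw [Matrix.single_mul_apply_of_ne _ _ _ _ _ hk, mul_zero]
  · simp

lemma col_z {A : Matrix (Fin n) (Fin n) F} (h : IsUnitriangular A) {z : Fin n}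
    (hz : ∀ a : Fin n, a ≠ z → z < a) (a : Fin n) :
    A a z = if a = z then 1 else 0 := by
  by_cases ha : a = z
  · simp [ha, h.1]
  · simp [ha, h.2 a _ (hz a ha)]

lemma mul_Ez {A : Matrix (Fin n) (Fin n) F} (h : IsUnitriangular A) {z : Fin n}
    (hz : ∀ a : Fin n, a ≠ z → z < a) :
    A * Matrix.single z z (1:F) = Matrix.single z z (1:F) := by
  ext a b
  by_cases hb : b = z
  · subst hb
    rw [Matrix.mul_single_apply_same, col_z h hz a]
    by_cases ha : a = b
    · simp [ha]
    · rw [if_neg ha, Matrix.single_apply_of_ne _ _ _ _ _ (fun hc => ha hc.1.symm), zero_mul]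
  · rw [Matrix.mul_single_apply_of_ne _ _ _ _ _ hb]
    rw [Matrix.single_apply_of_ne _ _ _ _ _ (fun hc => hb hc.2.symm)]

lemma Ez_mul_inv_transpose {A : Matrix (Fin n) (Fin n) F} (h : IsUnitriangular A) {z : Fin n}
    (hz : ∀ a : Fin n, a ≠ z → z < a) :
    Matrix.single z z (1:F) * (Aᵀ)⁻¹ = Matrix.single z z (1:F) := by
  have hinv : A⁻¹ * Matrix.single z z (1:F) = Matrix.single z z (1:F) := by
    conv_lhs => rw [← mul_Ez h hz, ← Matrix.mul_assoc,
      Matrix.nonsing_inv_mul A (isUnit_det h), Matrix.one_mul]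
  calc Matrix.single z z (1:F) * (Aᵀ)⁻¹
      = (Matrix.single z z (1:F))ᵀ * (A⁻¹)ᵀ := by
        rw [Matrix.transpose_nonsing_inv, transpose_std]
    _ = (A⁻¹ * Matrix.single z z (1:F))ᵀ := by
        rw [Matrix.transpose_mul]
    _ = _ := by rw [hinv, transpose_std]

lemma one_unitriangular : IsUnitriangular (1 : Matrix (Fin n) (Fin n) F) :=
  ⟨fun i => Matrix.one_apply_eq i, fun _ _ h => Matrix.one_apply_ne (ne_of_gt h)⟩

/-- The block matrix `[[1, C],[0, 1]]` as an element of `GL`. -/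
def unitUpper (C : Matrix (Fin n) (Fin n) F) : GL (Fin n ⊕ Fin n) F where
  val := Matrix.fromBlocks 1 C 0 1
  inv := Matrix.fromBlocks 1 (-C) 0 1
  val_inv := by
    rw [Matrix.fromBlocks_multiply]
    simp [Matrix.fromBlocks_one]
  inv_val := by
    rw [Matrix.fromBlocks_multiply]
    simp [Matrix.fromBlocks_one]

/-- The block matrix `[[A, 0],[0, A''ᵀ]]` as an element of `GL`, where `A''` is a two-sided
inverse of `A`. -/
def unitDiag (A A'' : Matrix (Fin n) (Fin n) F) (h1 : A * A'' = 1) (h2 : A'' * A = 1) :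
    GL (Fin n ⊕ Fin n) F where
  val := Matrix.fromBlocks A 0 0 A''ᵀ
  inv := Matrix.fromBlocks A'' 0 0 Aᵀ
  val_inv := by
    rw [Matrix.fromBlocks_multiply]
    simp only [Matrix.mul_zero, Matrix.zero_mul, add_zero, zero_add,
      ← Matrix.transpose_mul, h1, h2, Matrix.transpose_one, Matrix.fromBlocks_one]
  inv_val := by
    rw [Matrix.fromBlocks_multiply]
    simp only [Matrix.mul_zero, Matrix.zero_mul, add_zero, zero_add,
      ← Matrix.transpose_mul, h1, h2, Matrix.transpose_one, Matrix.fromBlocks_one]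

lemma block12 {A B C D A' B' C' D' : Matrix (Fin n) (Fin n) F}
    (h : Matrix.fromBlocks A B C D = Matrix.fromBlocks A' B' C' D') : B = B' := by
  ext i j
  simpa using congrFun (congrFun h (Sum.inl i)) (Sum.inr j)

end CSS

open CSS

/-- For `p` odd, the center of the Sylow `p`-subgroup `P(n,F)` of `Sp(2n,F)` consists
exactly of the block matrices `[[I, d • E_{1,1}],[0, I]]` with `d ∈ F`, and is
isomorphic to the additive group of `F`. -/
theorem center_symplectic_sylow (p r n : ℕ) (hp : p.Prime) (hp2 : p ≠ 2) (hr : 0 < r)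
    (hn : 1 ≤ n) (F : Type) [Field F] [Fintype F] (hF : Fintype.card F = p ^ r)
    (P : Subgroup (GL (Fin n ⊕ Fin n) F))
    (hP : ∀ M : GL (Fin n ⊕ Fin n) F, M ∈ P ↔
      ∃ A B : Matrix (Fin n) (Fin n) F,
        IsUnitriangular A ∧ Bᵀ = B ∧
        (M : Matrix (Fin n ⊕ Fin n) (Fin n ⊕ Fin n) F) =
          Matrix.fromBlocks A (A * B) 0 (Aᵀ)⁻¹) :
    ((fun M : GL (Fin n ⊕ Fin n) F =>
        (M : Matrix (Fin n ⊕ Fin n) (Fin n ⊕ Fin n) F)) ''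
        {M : GL (Fin n ⊕ Fin n) F | M ∈ P ∧ ∀ N ∈ P, M * N = N * M} =
      {X : Matrix (Fin n ⊕ Fin n) (Fin n ⊕ Fin n) F | ∃ d : F,
        X = Matrix.fromBlocks 1
          (d • Matrix.single (⟨0, by omega⟩ : Fin n) (⟨0, by omega⟩ : Fin n) (1 : F))
          0 1}) ∧
    Nonempty (↥(Subgroup.center ↥P) ≃* Multiplicative F) := by
  have hn0 : 0 < n := hn
  set i0 : Fin n := ⟨0, hn0⟩ with hi0
  set E0 : Matrix (Fin n) (Fin n) F := Matrix.single i0 i0 (1:F) with hE0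
  have hz0 : ∀ a : Fin n, a ≠ i0 → i0 < a := by
    intro a ha
    refine lt_of_le_of_ne ?_ (Ne.symm ha)
    exact Fin.mk_le_of_le_val (Nat.zero_le _)
  -- characteristic facts
  have hchar2 : (2:F) ≠ 0 := by
    refine Ring.two_ne_zero (fun hc => ?_)
    have h0 := FiniteField.even_card_of_char_two hc
    have h1 : Fintype.card F % 2 = 1 := by
      rw [hF]; exact Nat.odd_iff.mp ((hp.odd_of_ne_two hp2).pow)
    omega
  -- membership of the upper-block elements
  have memUpper : ∀ C : Matrix (Fin n) (Fin n) F, Cᵀ = C → unitUpper C ∈ P := by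
    intro C hC
    refine (hP _).2 ⟨1, C, one_unitriangular, hC, ?_⟩
    show Matrix.fromBlocks 1 C 0 1 = _
    rw [Matrix.one_mul, Matrix.transpose_one, inv_one]
  have hE0symm : ∀ d : F, (d • E0)ᵀ = d • E0 := by
    intro d
    rw [Matrix.transpose_smul, hE0, transpose_std]
  -- the candidate central elements commute with everything in P
  have commUpper : ∀ (d : F) (N : GL (Fin n ⊕ Fin n) F), N ∈ P →
      unitUpper (d • E0) * N = N * unitUpper (d • E0) := by
    intro d N hN
    obtain ⟨A, B, hA, hB, hNval⟩ := (hP N).1 hN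
    apply Units.ext
    rw [Units.val_mul, Units.val_mul]
    show Matrix.fromBlocks 1 (d • E0) 0 1 * (N : Matrix (Fin n ⊕ Fin n) (Fin n ⊕ Fin n) F)
        = (N : Matrix (Fin n ⊕ Fin n) (Fin n ⊕ Fin n) F) * Matrix.fromBlocks 1 (d • E0) 0 1
    rw [hNval, Matrix.fromBlocks_multiply, Matrix.fromBlocks_multiply]
    simp only [Matrix.smul_mul, Matrix.mul_smul, Matrix.one_mul, Matrix.mul_one,
      Matrix.mul_zero, Matrix.zero_mul, smul_zero, add_zero, zero_add, hE0]
    rw [Ez_mul_inv_transpose hA hz0, mul_Ez hA hz0, add_comm]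
  have hset : ((fun M : GL (Fin n ⊕ Fin n) F =>
        (M : Matrix (Fin n ⊕ Fin n) (Fin n ⊕ Fin n) F)) ''
        {M : GL (Fin n ⊕ Fin n) F | M ∈ P ∧ ∀ N ∈ P, M * N = N * M} =
      {X : Matrix (Fin n ⊕ Fin n) (Fin n ⊕ Fin n) F | ∃ d : F,
        X = Matrix.fromBlocks 1 (d • E0) 0 1}) := by
    ext X
    simp only [Set.mem_image, Set.mem_setOf_eq]
    constructor
    · rintro ⟨M, ⟨hMP, hMc⟩, rfl⟩
      obtain ⟨A, B, hA, hB, hM⟩ := (hP M).1 hMP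
      -- Step 1 : A = 1
      have hA1 : A = 1 := by
        ext a b
        have hNmem := memUpper (Matrix.single b b (1:F)) (transpose_std b b 1)
        have hc := congrArg Units.val (hMc _ hNmem)
        rw [Units.val_mul, Units.val_mul] at hc
        rw [show ((unitUpper (Matrix.single b b (1:F)) : GL (Fin n ⊕ Fin n) F) :
              Matrix (Fin n ⊕ Fin n) (Fin n ⊕ Fin n) F)
            = Matrix.fromBlocks 1 (Matrix.single b b (1:F)) 0 1 from rfl,
          hM, Matrix.fromBlocks_multiply, Matrix.fromBlocks_multiply] at hc
        have h12 := block12 hc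
        simp only [Matrix.one_mul, Matrix.mul_one, Matrix.mul_zero, Matrix.zero_mul,
          add_zero, zero_add] at h12
        rw [add_comm (A * B)] at h12
        have hAC : A * Matrix.single b b (1:F)
            = Matrix.single b b (1:F) * (Aᵀ)⁻¹ := add_right_cancel h12
        have hACA : A * Matrix.single b b (1:F) * Aᵀ
            = Matrix.single b b (1:F) := by
          rw [hAC, Matrix.mul_assoc, Matrix.nonsing_inv_mul Aᵀ
            (by rw [Matrix.det_transpose]; exact isUnit_det hA), Matrix.mul_one]
        have he := congrFun (congrFun hACA a) b
        rw [mulE_mulT, hA.1 b, mul_one] at he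
        rw [he]
        by_cases hab : a = b
        · rw [hab, Matrix.single_apply_same, Matrix.one_apply_eq]
        · rw [Matrix.single_apply_of_ne _ _ _ _ _ (fun hc' => hab hc'.1.symm),
            Matrix.one_apply_ne hab]
      -- Step 2 : relations on B
      have keyrel : ∀ i j : Fin n, i < j → (∀ b : Fin n, b ≠ i → B j b = 0) ∧ B i j = 0 := by
        intro i j hij
        have hji : j ≠ i := ne_of_gt hij
        set E : Matrix (Fin n) (Fin n) F := Matrix.single i j (1:F) with hE
        have hEE : E * E = 0 := by
          rw [hE]; exact Matrix.single_mul_single_of_ne _ _ _ _ hji _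
        have h1 : (1 + E) * (1 - E) = 1 := by
          rw [add_mul, one_mul, mul_sub, mul_one, hEE, sub_zero]
          abel
        have h2 : (1 - E) * (1 + E) = 1 := by
          rw [sub_mul, one_mul, mul_add, mul_one, hEE, add_zero]
          abel
        have hA'uni : IsUnitriangular (1 + E) := by
          constructor
          · intro a
            rw [Matrix.add_apply, Matrix.one_apply_eq, hE,
              Matrix.single_apply_of_ne _ _ _ _ _
                (fun hc' => hji (hc'.2.trans hc'.1.symm)), add_zero]
          · intro a b hba
            rw [Matrix.add_apply, Matrix.one_apply_ne (ne_of_gt hba), hE,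
              Matrix.single_apply_of_ne _ _ _ _ _
                (fun hc' => absurd hij (by rw [← hc'.1, ← hc'.2] at hba; exact not_lt.mpr hba.le)),
              zero_add]
        have hNmem : unitDiag (1+E) (1-E) h1 h2 ∈ P := by
          refine (hP _).2 ⟨1+E, 0, hA'uni, Matrix.transpose_zero, ?_⟩
          show Matrix.fromBlocks (1+E) 0 0 (1-E)ᵀ = _
          have hi : (((1+E) : Matrix (Fin n) (Fin n) F)ᵀ)⁻¹ = ((1-E) : Matrix (Fin n) (Fin n) F)ᵀ :=
            Matrix.inv_eq_right_inv (by rw [← Matrix.transpose_mul, h2, Matrix.transpose_one])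
          rw [Matrix.mul_zero, hi]
        have hc := congrArg Units.val (hMc _ hNmem)
        rw [Units.val_mul, Units.val_mul] at hc
        rw [show ((unitDiag (1+E) (1-E) h1 h2 : GL (Fin n ⊕ Fin n) F) :
              Matrix (Fin n ⊕ Fin n) (Fin n ⊕ Fin n) F)
            = Matrix.fromBlocks (1+E) 0 0 ((1-E) : Matrix (Fin n) (Fin n) F)ᵀ from rfl,
          hM, hA1, Matrix.fromBlocks_multiply, Matrix.fromBlocks_multiply] at hc
        have h12 := block12 hc
        simp only [Matrix.one_mul, Matrix.mul_one, Matrix.mul_zero, Matrix.zero_mul,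
          add_zero, zero_add, Matrix.transpose_one, inv_one] at h12
        rw [Matrix.transpose_sub, Matrix.transpose_one, hE, transpose_std] at h12
        rw [Matrix.mul_sub, Matrix.mul_one, Matrix.add_mul, Matrix.one_mul,
          sub_eq_add_neg] at h12
        have hkey := add_left_cancel h12
        constructor
        · intro b hb
          have hx := congrFun (congrFun hkey i) b
          rw [Matrix.neg_apply, Matrix.mul_single_apply_of_ne _ _ _ _ _ hb,
            Matrix.single_mul_apply_same, one_mul, neg_zero] at hx
          exact hx.symm
        · have hx := congrFun (congrFun hkey i) i
          rw [Matrix.neg_apply, Matrix.mul_single_apply_same,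
            Matrix.single_mul_apply_same, one_mul, mul_one] at hx
          have hsym : B j i = B i j := by
            have := congrFun (congrFun hB i) j
            rwa [Matrix.transpose_apply] at this
          rw [hsym] at hx
          have h2b : B i j + B i j = 0 := neg_eq_iff_add_eq_zero.mp hx
          have h2b' : 2 * B i j = 0 := by rw [two_mul]; exact h2b
          rcases mul_eq_zero.mp h2b' with h | h
          · exact absurd h hchar2
          · exact h
      -- Step 3 : B = B i0 i0 • E0
      refine ⟨B i0 i0, ?_⟩
      have hBd : B = B i0 i0 • E0 := by
        ext a b
        by_cases ha : a = i0
        · by_cases hb2 : b = i0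
          · rw [ha, hb2, hE0, Matrix.smul_apply, Matrix.single_apply_same,
              smul_eq_mul, mul_one]
          · rw [ha, hE0, Matrix.smul_apply,
              Matrix.single_apply_of_ne _ _ _ _ _ (fun hc' => hb2 hc'.2.symm),
              smul_zero]
            exact (keyrel i0 b (hz0 b hb2)).2
        · by_cases hb2 : b = i0
          · rw [hb2, hE0, Matrix.smul_apply,
              Matrix.single_apply_of_ne _ _ _ _ _ (fun hc' => ha hc'.1.symm),
              smul_zero]
            have hsym : B a i0 = B i0 a := by
              have := congrFun (congrFun hB i0) a
              rwa [Matrix.transpose_apply] at this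
            rw [hsym]
            exact (keyrel i0 a (hz0 a ha)).2
          · rw [hE0, Matrix.smul_apply,
              Matrix.single_apply_of_ne _ _ _ _ _ (fun hc' => ha hc'.1.symm),
              smul_zero]
            exact (keyrel i0 a (hz0 a ha)).1 b hb2
      conv_lhs => rw [hM, hA1, hBd]
      rw [Matrix.one_mul, Matrix.transpose_one, inv_one]
    · rintro ⟨d, rfl⟩
      exact ⟨unitUpper (d • E0), ⟨memUpper _ (hE0symm d), fun N hN => commUpper d N hN⟩, rfl⟩
  refine ⟨hset, ?_⟩
  have memU : ∀ d : F, unitUpper (d • E0) ∈ P := fun d => memUpper _ (hE0symm d)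
  have centU : ∀ d : F, (⟨unitUpper (d • E0), memU d⟩ : ↥P) ∈ Subgroup.center ↥P := by
    intro d
    rw [Subgroup.mem_center_iff]
    intro g
    exact Subtype.ext (commUpper d g.1 g.2).symm
  have hmul : ∀ a b : F, (⟨⟨unitUpper ((a+b) • E0), memU _⟩, centU _⟩ : Subgroup.center ↥P)
      = ⟨⟨unitUpper (a • E0), memU _⟩, centU _⟩ * ⟨⟨unitUpper (b • E0), memU _⟩, centU _⟩ := by
    intro a b
    apply Subtype.ext; apply Subtype.ext; apply Units.ext
    show Matrix.fromBlocks 1 ((a+b) • E0) 0 1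
        = Matrix.fromBlocks 1 (a • E0) 0 1 * Matrix.fromBlocks 1 (b • E0) 0 1
    rw [Matrix.fromBlocks_multiply]
    simp only [Matrix.one_mul, Matrix.mul_one, Matrix.mul_zero, Matrix.zero_mul,
      add_zero, zero_add]
    rw [add_smul, add_comm]
  let Φ : Multiplicative F →* Subgroup.center ↥P :=
    MonoidHom.mk' (fun d => ⟨⟨unitUpper ((Multiplicative.toAdd d) • E0), memU _⟩, centU _⟩)
      (fun a b => hmul _ _)
  have hentry : ∀ c : F, (Matrix.fromBlocks (1 : Matrix (Fin n) (Fin n) F) (c • E0)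
      (0 : Matrix (Fin n) (Fin n) F) (1 : Matrix (Fin n) (Fin n) F))
      (Sum.inl i0) (Sum.inr i0) = c := by
    intro c
    rw [Matrix.fromBlocks_apply₁₂, hE0, Matrix.smul_apply, Matrix.single_apply_same,
      smul_eq_mul, mul_one]
  have hinj : Function.Injective Φ := by
    intro a b hab
    have h1 := congrArg (fun z : Subgroup.center ↥P =>
      (((z : ↥P) : GL (Fin n ⊕ Fin n) F) : Matrix (Fin n ⊕ Fin n) (Fin n ⊕ Fin n) F)
        (Sum.inl i0) (Sum.inr i0)) hab
    simp only [Φ, MonoidHom.mk'_apply] at h1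
    rw [show ((unitUpper ((Multiplicative.toAdd a) • E0) : GL (Fin n ⊕ Fin n) F) :
          Matrix (Fin n ⊕ Fin n) (Fin n ⊕ Fin n) F)
        = Matrix.fromBlocks 1 ((Multiplicative.toAdd a) • E0) 0 1 from rfl,
      show ((unitUpper ((Multiplicative.toAdd b) • E0) : GL (Fin n ⊕ Fin n) F) :
          Matrix (Fin n ⊕ Fin n) (Fin n ⊕ Fin n) F)
        = Matrix.fromBlocks 1 ((Multiplicative.toAdd b) • E0) 0 1 from rfl,
      hentry, hentry] at h1
    exact h1
  have hsurj : Function.Surjective Φ := by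
    intro z
    have hz1 : ((z : ↥P) : GL (Fin n ⊕ Fin n) F) ∈ P := (z : ↥P).2
    have hzc : ∀ N ∈ P, ((z : ↥P) : GL (Fin n ⊕ Fin n) F) * N
        = N * ((z : ↥P) : GL (Fin n ⊕ Fin n) F) := by
      intro N hN
      have h := Subgroup.mem_center_iff.mp z.2 ⟨N, hN⟩
      exact (congrArg Subtype.val h).symm
    have hmem : ((((z : ↥P) : GL (Fin n ⊕ Fin n) F)) :
        Matrix (Fin n ⊕ Fin n) (Fin n ⊕ Fin n) F)
        ∈ {X : Matrix (Fin n ⊕ Fin n) (Fin n ⊕ Fin n) F | ∃ d : F,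
            X = Matrix.fromBlocks 1 (d • E0) 0 1} := by
      rw [← hset]
      exact ⟨_, ⟨hz1, hzc⟩, rfl⟩
    obtain ⟨d, hd⟩ := hmem
    refine ⟨Multiplicative.ofAdd d, ?_⟩
    apply Subtype.ext; apply Subtype.ext; apply Units.ext
    exact hd.symm
  exact ⟨(MulEquiv.ofBijective Φ ⟨hinj, hsurj⟩).symm⟩
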